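/- Mixed second derivative of the coupled energy term: for h(x₀, xᵢ) = (L(x₀) − l(xᵢ))² with L(x₀) ≠ 0 and l(xᵢ) ≠ 0, the mixed Hessian block ∂²h/∂xᵢ∂x₀ equals (−2/(L(x₀)·l(xᵢ))) · δ(x₀) δ(xᵢ)ᵀ. -/

import Mathlib

noncomputable def trussL (x : Fin 4 → ℝ) : ℝ :=
  Real.sqrt ((x 0 - x 2) ^ 2 + (x 1 - x 3) ^ 2)

def trussδ (x : Fin 4 → ℝ) : Fin 4 → ℝ :=
  ![x 0 - x 2, x 1 - x 3, x 2 - x 0, x 3 - x 1]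

noncomputable def trussP (i : Fin 4) : (Fin 4 → ℝ) →L[ℝ] ℝ :=
  ContinuousLinearMap.proj i

noncomputable def trussD (x : Fin 4 → ℝ) : (Fin 4 → ℝ) →L[ℝ] ℝ :=
  (1 / (2 * trussL x)) •
    ((2 * (x 0 - x 2)) • (trussP 0 - trussP 2) + (2 * (x 1 - x 3)) • (trussP 1 - trussP 3))

lemma trussL_sq_pos (x : Fin 4 → ℝ) (hx : trussL x ≠ 0) :
    (x 0 - x 2) ^ 2 + (x 1 - x 3) ^ 2 ≠ 0 := by
  intro h; apply hx; simp [trussL, h]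

lemma trussL_hasFDerivAt (x : Fin 4 → ℝ) (hx : trussL x ≠ 0) :
    HasFDerivAt trussL (trussD x) x := by
  have h0 := hasFDerivAt_apply (𝕜 := ℝ) (0 : Fin 4) x
  have h1 := hasFDerivAt_apply (𝕜 := ℝ) (1 : Fin 4) x
  have h2 := hasFDerivAt_apply (𝕜 := ℝ) (2 : Fin 4) x
  have h3 := hasFDerivAt_apply (𝕜 := ℝ) (3 : Fin 4) x
  have hq : HasFDerivAt (fun y : Fin 4 → ℝ => (y 0 - y 2) ^ 2 + (y 1 - y 3) ^ 2)
      ((2 * (x 0 - x 2)) • (trussP 0 - trussP 2) +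
        (2 * (x 1 - x 3)) • (trussP 1 - trussP 3)) x := by
    have := ((h0.sub h2).mul (h0.sub h2)).add ((h1.sub h3).mul (h1.sub h3))
    simp only [pow_two]
    refine this.congr_fderiv ?_
    ext v
    simp [trussP]
    ring
  have := (Real.hasDerivAt_sqrt (trussL_sq_pos x hx)).comp_hasFDerivAt x hq
  exact this

lemma trussD_apply (x v : Fin 4 → ℝ) :
    trussD x v = (1 / (2 * trussL x)) *
      (2 * (x 0 - x 2) * (v 0 - v 2) + 2 * (x 1 - x 3) * (v 1 - v 3)) := by
  simp [trussD, trussP]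
  ring

/-- Mixed second derivative of the coupled energy term
`h(x₀, xᵢ) = (L(x₀) − l(xᵢ))²`: the mixed Hessian block `∂²h/∂xᵢ∂x₀` equals
`(−2/(L(x₀) l(xᵢ))) δ(x₀) δ(xᵢ)ᵀ` as a bilinear form. -/
theorem coupled_energy_mixed_hessian (x₀ xᵢ : Fin 4 → ℝ)
    (hx₀ : trussL x₀ ≠ 0) (hxᵢ : trussL xᵢ ≠ 0) :
    ∀ v w : Fin 4 → ℝ,
      fderiv ℝ (fun y₀ =>
          fderiv ℝ (fun yᵢ => (trussL y₀ - trussL yᵢ) ^ 2) xᵢ v) x₀ w =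
        (-2 / (trussL x₀ * trussL xᵢ)) *
          ((∑ k, trussδ x₀ k * w k) * (∑ k, trussδ xᵢ k * v k)) := by
  intro v w
  have hDᵢ := trussL_hasFDerivAt xᵢ hxᵢ
  have hD₀ := trussL_hasFDerivAt x₀ hx₀
  have hinner : (fun y₀ => fderiv ℝ (fun yᵢ => (trussL y₀ - trussL yᵢ) ^ 2) xᵢ v) =
      fun y₀ => (trussL y₀ - trussL xᵢ) * (-2 * trussD xᵢ v) := by
    funext y₀
    have hsub : HasFDerivAt (fun yᵢ => trussL y₀ - trussL yᵢ) (-trussD xᵢ) xᵢ :=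
      hDᵢ.const_sub _
    have h : HasFDerivAt (fun yᵢ => (trussL y₀ - trussL yᵢ) ^ 2)
        ((trussL y₀ - trussL xᵢ) • (-trussD xᵢ) +
          (trussL y₀ - trussL xᵢ) • (-trussD xᵢ)) xᵢ := by
      have := hsub.mul hsub
      simp only [pow_two]
      exact this
    rw [h.fderiv]
    simp
    ring
  rw [hinner]
  have houter : HasFDerivAt
      (fun y₀ => (trussL y₀ - trussL xᵢ) * (-2 * trussD xᵢ v))
      ((-2 * trussD xᵢ v) • trussD x₀) x₀ := by
    have := (hD₀.sub_const (trussL xᵢ)).mul_const (-2 * trussD xᵢ v)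
    convert this using 1
  rw [houter.fderiv]
  simp only [ContinuousLinearMap.smul_apply, smul_eq_mul, trussD_apply,
    Fin.sum_univ_four, trussδ]
  simp only [Matrix.cons_val_zero, Matrix.cons_val_one, Matrix.head_cons,
    Matrix.cons_val_two, Matrix.tail_cons, Matrix.cons_val_three]
  field_simp
  ring
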